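/- Suppose (I', δ') is the right Kan extension of G' ∘ I'' along F', and (H, δ) is the right Kan extension of G ∘ I' along F. If G is a right adjoint, then (H, Gδ' ∘ δ_{F'}) is the right Kan extension of G ∘ G' ∘ I'' along F ∘ F'. -/

import Mathlib

open CategoryTheory

section Aux

variable {C D H1 H2 : Type*} [Category C] [Category D] [Category H1] [Category H2]

/-- Transpose of `β : L1 ⋙ K ⟶ J ⋙ G` across an adjunction `Gl ⊣ G`. -/
@[simps]
def auxTransp {Gl : H2 ⥤ H1} {G : H1 ⥤ H2} (adj : Gl ⊣ G) (L1 : C ⥤ D) (J : C ⥤ H1)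
    (K : D ⥤ H2) (β : L1 ⋙ K ⟶ J ⋙ G) : L1 ⋙ (K ⋙ Gl) ⟶ J where
  app X := Gl.map (β.app X) ≫ adj.counit.app (J.obj X)
  naturality X Y f := by
    have hβ := β.naturality f
    have hc := adj.counit.naturality (J.map f)
    simp only [Functor.comp_obj, Functor.comp_map, Functor.id_obj, Functor.id_map,
      Category.assoc] at hβ hc ⊢
    rw [← hc, ← Gl.map_comp_assoc, ← Gl.map_comp_assoc, hβ]

/-- The candidate lift `K ⟶ I ⋙ G` obtained by transposing twice. -/
@[simps]
noncomputable def auxLift {Gl : H2 ⥤ H1} {G : H1 ⥤ H2} (adj : Gl ⊣ G) (L1 : C ⥤ D)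
    (I : D ⥤ H1) (J : C ⥤ H1) (δ' : L1 ⋙ I ⟶ J) [I.IsRightKanExtension δ']
    (K : D ⥤ H2) (β : L1 ⋙ K ⟶ J ⋙ G) : K ⟶ I ⋙ G where
  app d := adj.unit.app (K.obj d) ≫
    G.map ((I.liftOfIsRightKanExtension δ' (K ⋙ Gl) (auxTransp adj L1 J K β)).app d)
  naturality X Y f := by
    have h := (I.liftOfIsRightKanExtension δ' (K ⋙ Gl) (auxTransp adj L1 J K β)).naturality f
    have hu := adj.unit.naturality (K.map f)
    simp only [Functor.comp_obj, Functor.comp_map, Functor.id_obj, Functor.id_map,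
      Category.assoc] at h hu ⊢
    rw [← Category.assoc, hu, Category.assoc, ← G.map_comp, ← G.map_comp, h]

/-- Right adjoints preserve right Kan extensions. -/
lemma aux_ran_comp_right (L1 : C ⥤ D) (I : D ⥤ H1) (J : C ⥤ H1) (δ' : L1 ⋙ I ⟶ J)
    (G : H1 ⥤ H2) [I.IsRightKanExtension δ'] [G.IsRightAdjoint] :
    (I ⋙ G).IsRightKanExtension
      ((Functor.associator L1 I G).inv ≫ Functor.whiskerRight δ' G) := by
  let adj : G.leftAdjoint ⊣ G := Adjunction.ofIsRightAdjoint G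
  constructor
  constructor
  refine Limits.IsTerminal.ofUniqueHom
    (fun g => CostructuredArrow.homMk (auxLift adj L1 I J δ' g.left g.hom) ?_)
    (fun g η => ?_)
  · show Functor.whiskerLeft L1 (auxLift adj L1 I J δ' g.left g.hom) ≫
      ((Functor.associator L1 I G).inv ≫ Functor.whiskerRight δ' G) = g.hom
    ext X
    dsimp
    simp only [auxLift_app, Category.id_comp, Category.comp_id, Category.assoc]
    have h := I.liftOfIsRightKanExtension_fac_app δ' (g.left ⋙ G.leftAdjoint)
      (auxTransp adj L1 J g.left g.hom) X
    simp only [auxTransp_app] at h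
    have hu := adj.unit.naturality (g.hom.app X)
    dsimp at hu
    have ht := adj.right_triangle_components (J.obj X)
    rw [← G.map_comp, h, G.map_comp, ← Category.assoc, ← hu, Category.assoc, ht,
      Category.comp_id]
  · dsimp only [Functor.RightExtension.mk, CostructuredArrow.mk] at η ⊢
    have w : Functor.whiskerLeft L1 (η.left : g.left ⟶ I ⋙ G) ≫
        ((Functor.associator L1 I G).inv ≫ Functor.whiskerRight δ' G) = g.hom :=
      CostructuredArrow.w η
    have key : Functor.whiskerRight (G := g.left) (H := I ⋙ G) η.left G.leftAdjoint ≫ (Functor.associator I G G.leftAdjoint).hom ≫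
        Functor.whiskerLeft I adj.counit ≫ (Functor.rightUnitor I).hom =
        I.liftOfIsRightKanExtension δ' (g.left ⋙ G.leftAdjoint)
          (auxTransp adj L1 J g.left g.hom) := by
      apply I.hom_ext_of_isRightKanExtension δ'
      rw [Functor.liftOfIsRightKanExtension_fac]
      ext X
      dsimp
      have wX := NatTrans.congr_app w X
      dsimp at wX
      simp only [Category.id_comp] at wX
      have hc := adj.counit.naturality (δ'.app X)
      dsimp at hc
      simp only [auxTransp_app, Category.id_comp, Category.comp_id, Category.assoc]
      rw [← hc, ← G.leftAdjoint.map_comp_assoc, wX]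
    ext1
    dsimp only [CostructuredArrow.homMk_left]
    show η.left = auxLift adj L1 I J δ' g.left g.hom
    ext X
    dsimp
    have keyX := NatTrans.congr_app key X
    dsimp at keyX
    simp only [Category.id_comp, Category.comp_id] at keyX
    have hu := adj.unit.naturality (η.left.app X)
    dsimp at hu
    have ht := adj.right_triangle_components (I.obj X)
    show η.left.app X = adj.unit.app _ ≫ G.map ((I.liftOfIsRightKanExtension δ'
      (g.left ⋙ G.leftAdjoint) (auxTransp adj L1 J g.left g.hom)).app X)
    rw [← keyX, G.map_comp, ← Category.assoc, ← hu, Category.assoc, ht,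
      Category.comp_id]

/-- Pasting of right Kan extensions. -/
lemma aux_ran_paste {E : Type*} [Category E]
    (L1 : C ⥤ D) (L2 : D ⥤ E) (M : D ⥤ H1) (N : E ⥤ H1) (J : C ⥤ H1)
    (μ : L1 ⋙ M ⟶ J) (δ : L2 ⋙ N ⟶ M)
    [M.IsRightKanExtension μ] [N.IsRightKanExtension δ] :
    N.IsRightKanExtension
      ((Functor.associator L1 L2 N).hom ≫ Functor.whiskerLeft L1 δ ≫ μ : (L1 ⋙ L2) ⋙ N ⟶ J) := by
  constructor
  constructor
  refine Limits.IsTerminal.ofUniqueHom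
    (fun g => CostructuredArrow.homMk
      (N.liftOfIsRightKanExtension δ g.left
        (M.liftOfIsRightKanExtension μ (L2 ⋙ g.left)
          ((Functor.associator L1 L2 g.left).inv ≫ g.hom))) ?_)
    (fun g η => ?_)
  · show Functor.whiskerLeft (L1 ⋙ L2) (N.liftOfIsRightKanExtension δ g.left
        (M.liftOfIsRightKanExtension μ (L2 ⋙ g.left)
          ((Functor.associator L1 L2 g.left).inv ≫ g.hom))) ≫
      ((Functor.associator L1 L2 N).hom ≫ Functor.whiskerLeft L1 δ ≫ μ) = g.hom
    ext X
    dsimp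
    simp only [Category.id_comp, Category.comp_id, Category.assoc]
    have h1 := M.liftOfIsRightKanExtension_fac_app μ (L2 ⋙ g.left)
      ((Functor.associator L1 L2 g.left).inv ≫ g.hom) X
    have h2 := N.liftOfIsRightKanExtension_fac δ g.left
      (M.liftOfIsRightKanExtension μ (L2 ⋙ g.left)
        ((Functor.associator L1 L2 g.left).inv ≫ g.hom))
    have h2X := NatTrans.congr_app h2 (L1.obj X)
    dsimp at h1 h2X
    simp only [Category.id_comp, Category.comp_id, Category.assoc] at h1 h2X
    rw [← Category.assoc, h2X, h1]
  · dsimp only [Functor.RightExtension.mk, CostructuredArrow.mk] at η ⊢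
    ext1
    show (η.left : g.left ⟶ N) = N.liftOfIsRightKanExtension δ g.left
      (M.liftOfIsRightKanExtension μ (L2 ⋙ g.left)
        ((Functor.associator L1 L2 g.left).inv ≫ g.hom))
    apply N.hom_ext_of_isRightKanExtension δ
    rw [N.liftOfIsRightKanExtension_fac]
    apply M.hom_ext_of_isRightKanExtension μ
    rw [M.liftOfIsRightKanExtension_fac]
    ext X
    have wX := NatTrans.congr_app (show Functor.whiskerLeft (L1 ⋙ L2) (η.left : g.left ⟶ N) ≫
      ((Functor.associator L1 L2 N).hom ≫ Functor.whiskerLeft L1 δ ≫ μ) = g.hom from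
      CostructuredArrow.w η) X
    dsimp at wX ⊢
    simp only [Category.id_comp, Category.comp_id, Category.assoc] at wX ⊢
    rw [← Category.assoc] at wX ⊢
    exact wX

end Aux

/-- If `(I', δ')` is the right Kan extension of `G' ∘ I''` along `F'`, `(H, δ)` is the right
Kan extension of `G ∘ I'` along `F`, and `G` is a right adjoint, then `H` together with the
composite transformation `Gδ' ∘ δ_{F'}` is the right Kan extension of `G ∘ G' ∘ I''` along
`F ∘ F'`. -/
theorem stmt1 {A A' A'' B B' B'' : Type*}
    [Category A] [Category A'] [Category A''] [Category B] [Category B'] [Category B'']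
    (F : A' ⥤ A) (F' : A'' ⥤ A') (I' : A' ⥤ B') (I'' : A'' ⥤ B'')
    (G : B' ⥤ B) (G' : B'' ⥤ B') (H : A ⥤ B)
    (δ' : F' ⋙ I' ⟶ I'' ⋙ G') (δ : F ⋙ H ⟶ I' ⋙ G)
    [I'.IsRightKanExtension δ'] [H.IsRightKanExtension δ] [G.IsRightAdjoint] :
    H.IsRightKanExtension
      ((Functor.associator F' F H).hom ≫ Functor.whiskerLeft F' δ ≫
        (Functor.associator F' I' G).inv ≫ Functor.whiskerRight δ' G ≫
        (Functor.associator I'' G' G).hom :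
        (F' ⋙ F) ⋙ H ⟶ I'' ⋙ (G' ⋙ G)) := by
  have h1 : (I' ⋙ G).IsRightKanExtension
      ((Functor.associator F' I' G).inv ≫ Functor.whiskerRight δ' G) :=
    aux_ran_comp_right F' I' (I'' ⋙ G') δ' G
  have h2 : (I' ⋙ G).IsRightKanExtension
      (((Functor.associator F' I' G).inv ≫ Functor.whiskerRight δ' G ≫
        (Functor.associator I'' G' G).hom : F' ⋙ (I' ⋙ G) ⟶ I'' ⋙ (G' ⋙ G))) :=
    Functor.isRightKanExtension_of_iso (Iso.refl (I' ⋙ G))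
      ((Functor.associator F' I' G).inv ≫ Functor.whiskerRight δ' G)
      (((Functor.associator F' I' G).inv ≫ Functor.whiskerRight δ' G ≫
        (Functor.associator I'' G' G).hom : F' ⋙ (I' ⋙ G) ⟶ I'' ⋙ (G' ⋙ G)))
      (by ext; simp)
  exact aux_ran_paste F' F (I' ⋙ G) H (I'' ⋙ (G' ⋙ G))
    (((Functor.associator F' I' G).inv ≫ Functor.whiskerRight δ' G ≫
        (Functor.associator I'' G' G).hom : F' ⋙ (I' ⋙ G) ⟶ I'' ⋙ (G' ⋙ G))) δ
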